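/- arXiv:1706.05264 — 6 statements merged into one kernel-verified Lean document; each statement's English description precedes it below -/
import Mathlib

section
/- Let f be a Schur-convex function on probability distributions on k elements, let δ ≥ 0, and let p and q be probability distributions on k elements with non-increasingly ordered entries such that p ≻ q. Then f(p̄^(δ)) ≥ f(q̄^(δ)) and f(p̲^(δ)) ≥ f(q̲^(δ)), where p̄^(δ), q̄^(δ) are the steepest δ-approximations and p̲^(δ), q̲^(δ) the flattest δ-approximations; that is, the smoothed versions f̄^(δ) and f̲^(δ) of f are monotonic under the majorization order. -/
open Finset

noncomputable section

/-- The ℓ¹ distance `‖a − b‖ = Σᵢ |aᵢ − bᵢ|` between two vectors in `ℝ^k`. -/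
def l1dist {k : ℕ} (a b : Fin k → ℝ) : ℝ := ∑ i, |a i - b i|

/-- A probability distribution on `k` elements: nonnegative entries summing to 1. -/
def IsProbDist {k : ℕ} (p : Fin k → ℝ) : Prop := (∀ i, 0 ≤ p i) ∧ ∑ i, p i = 1

/-- The vector `a` rearranged in non-increasing order, `a↓`. -/
def descSort {k : ℕ} (a : Fin k → ℝ) : Fin k → ℝ := fun i => a (Tuple.sort a i.rev)

/-- The sum of the first `l` entries of `a` (1-based indexing: entries `1,…,l`). -/
def psum {k : ℕ} (a : Fin k → ℝ) (l : ℕ) : ℝ :=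
  ∑ i ∈ univ.filter (fun i : Fin k => (i : ℕ) < l), a i

/-- The sum of the entries of `a` from position `l` to `k` (1-based indexing). -/
def tailSum {k : ℕ} (a : Fin k → ℝ) (l : ℕ) : ℝ :=
  ∑ i ∈ univ.filter (fun i : Fin k => l ≤ (i : ℕ) + 1), a i

/-- `a` majorizes `b` (`a ≻ b`): the total sums agree and all partial sums of the
non-increasing rearrangements satisfy `Σ_{i=1}^l a↓ᵢ ≥ Σ_{i=1}^l b↓ᵢ` for `l = 1,…,k`. -/
def Majorizes {k : ℕ} (a b : Fin k → ℝ) : Prop :=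
  (∑ i, a i = ∑ i, b i) ∧
  ∀ l : ℕ, 1 ≤ l → l ≤ k → psum (descSort b) l ≤ psum (descSort a) l

/-- The distribution `e₁ = (1,0,…,0)`. -/
def e1 (k : ℕ) : Fin k → ℝ := fun i => if (i : ℕ) = 0 then 1 else 0

/-- The uniform distribution `η = (1/k,…,1/k)`. -/
def unif (k : ℕ) : Fin k → ℝ := fun _ => (k : ℝ)⁻¹

/-- The unnormalised vector `r` in the construction of the steepest approximation:
`r₁ = p₁ + δ/2`, `rᵢ = pᵢ` otherwise. -/
def steepR {k : ℕ} (δ : ℝ) (p : Fin k → ℝ) : Fin k → ℝ :=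
  fun i => if (i : ℕ) = 0 then p i + δ / 2 else p i

/-- `lstar ∈ {1,…,k}` is the truncation index of the steepest `δ`-approximation of `p`:
`Σ_{i=1}^{l*} rᵢ ≤ 1 < Σ_{i=1}^{l*+1} rᵢ` (the second sum being meaningful for `l* < k`). -/
def IsTruncIdx {k : ℕ} (δ : ℝ) (p : Fin k → ℝ) (lstar : ℕ) : Prop :=
  1 ≤ lstar ∧ lstar ≤ k ∧ psum (steepR δ p) lstar ≤ 1 ∧
    (lstar < k → 1 < psum (steepR δ p) (lstar + 1))

/-- `pbar` is the steepest `δ`-approximation `p̄^(δ)` of `p` (assumed non-increasingly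
ordered): if `‖p − e₁‖ ≤ δ` then `pbar = e₁`; otherwise `pbar` agrees with `r` on the
first `l*` entries, has `1 − Σ_{i=1}^{l*} rᵢ` at position `l*+1`, and `0` afterwards. -/
def IsSteepest {k : ℕ} (δ : ℝ) (p pbar : Fin k → ℝ) : Prop :=
  (l1dist p (e1 k) ≤ δ ∧ pbar = e1 k) ∨
  (δ < l1dist p (e1 k) ∧ ∃ lstar : ℕ, IsTruncIdx δ p lstar ∧
    ∀ i : Fin k, pbar i =
      if (i : ℕ) < lstar then steepR δ p i
      else if (i : ℕ) = lstar then 1 - psum (steepR δ p) lstar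
      else 0)

/-- `ε(x) = Σ_{i : pᵢ ≥ x} (pᵢ − x)`. -/
def epsFn {k : ℕ} (p : Fin k → ℝ) (x : ℝ) : ℝ :=
  ∑ i ∈ univ.filter (fun i : Fin k => x ≤ p i), (p i - x)

/-- `γ(y) = Σ_{i : pᵢ ≤ y} (y − pᵢ)`. -/
def gammaFn {k : ℕ} (p : Fin k → ℝ) (y : ℝ) : ℝ :=
  ∑ i ∈ univ.filter (fun i : Fin k => p i ≤ y), (y - p i)

/-- `pflat` is the flattest `δ`-approximation of `p` built from the cutting level `x*` and
the filling level `y*`: `x*, y* ∈ [0,1]`, `ε(x*) = γ(y*) = δ/2`, and `pflat` equals `x*`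
where `pᵢ ≥ x*`, equals `y*` where `pᵢ ≤ y*`, and equals `pᵢ` otherwise. -/
def IsFlattestWith {k : ℕ} (δ : ℝ) (p pflat : Fin k → ℝ) (x y : ℝ) : Prop :=
  x ∈ Set.Icc (0 : ℝ) 1 ∧ y ∈ Set.Icc (0 : ℝ) 1 ∧
  epsFn p x = δ / 2 ∧ gammaFn p y = δ / 2 ∧
  ∀ i : Fin k, pflat i = if x ≤ p i then x else if p i ≤ y then y else p i

/-- `pflat` is the flattest `δ`-approximation `p̲^(δ)` of `p` (assumed non-increasingly
ordered): if `‖p − η‖ ≤ δ` then `pflat = η`; otherwise it is obtained by cutting at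
level `x*` and filling at level `y*`. -/
def IsFlattest {k : ℕ} (δ : ℝ) (p pflat : Fin k → ℝ) : Prop :=
  (l1dist p (unif k) ≤ δ ∧ pflat = unif k) ∨
  (δ < l1dist p (unif k) ∧ ∃ x y : ℝ, IsFlattestWith δ p pflat x y)

end

noncomputable section Aux
open Finset
variable {k : ℕ}

/-- positive-part sum `Σᵢ (pᵢ - t)₊`. -/
def pplus (p : Fin k → ℝ) (t : ℝ) : ℝ := ∑ i, max (p i - t) 0

/-- negative-part sum `Σᵢ (t - pᵢ)₊`. -/
def gplus (p : Fin k → ℝ) (t : ℝ) : ℝ := ∑ i, max (t - p i) 0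

lemma epsFn_eq_pplus (p : Fin k → ℝ) (t : ℝ) : epsFn p t = pplus p t := by
  unfold epsFn pplus
  rw [← Finset.sum_filter_add_sum_filter_not univ (fun i => t ≤ p i)
      (fun i => max (p i - t) 0)]
  have h1 : ∑ i ∈ univ.filter (fun i : Fin k => t ≤ p i), max (p i - t) 0
      = ∑ i ∈ univ.filter (fun i : Fin k => t ≤ p i), (p i - t) :=
    Finset.sum_congr rfl fun i hi => by
      have := (mem_filter.mp hi).2
      rw [max_eq_left (by linarith)]
  have h2 : ∑ i ∈ univ.filter (fun i : Fin k => ¬ t ≤ p i), max (p i - t) 0 = 0 :=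
    Finset.sum_eq_zero fun i hi => by
      have := (mem_filter.mp hi).2
      rw [max_eq_right (by push_neg at this; linarith)]
  rw [h1, h2, add_zero]

lemma gammaFn_eq_gplus (p : Fin k → ℝ) (t : ℝ) : gammaFn p t = gplus p t := by
  unfold gammaFn gplus
  rw [← Finset.sum_filter_add_sum_filter_not univ (fun i => p i ≤ t)
      (fun i => max (t - p i) 0)]
  have h1 : ∑ i ∈ univ.filter (fun i : Fin k => p i ≤ t), max (t - p i) 0
      = ∑ i ∈ univ.filter (fun i : Fin k => p i ≤ t), (t - p i) :=
    Finset.sum_congr rfl fun i hi => by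
      have := (mem_filter.mp hi).2
      rw [max_eq_left (by linarith)]
  have h2 : ∑ i ∈ univ.filter (fun i : Fin k => ¬ p i ≤ t), max (t - p i) 0 = 0 :=
    Finset.sum_eq_zero fun i hi => by
      have := (mem_filter.mp hi).2
      rw [max_eq_right (by push_neg at this; linarith)]
  rw [h1, h2, add_zero]

lemma pplus_nonneg (p : Fin k → ℝ) (t : ℝ) : 0 ≤ pplus p t :=
  Finset.sum_nonneg fun i _ => le_max_right _ _

lemma pplus_anti (p : Fin k → ℝ) {s t : ℝ} (h : s ≤ t) : pplus p t ≤ pplus p s :=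
  Finset.sum_le_sum fun i _ => max_le_max (by linarith) le_rfl

lemma gplus_mono (p : Fin k → ℝ) {s t : ℝ} (h : s ≤ t) : gplus p s ≤ gplus p t :=
  Finset.sum_le_sum fun i _ => max_le_max (by linarith) le_rfl

lemma pplus_sub_gplus (p : Fin k → ℝ) (t : ℝ) :
    pplus p t - gplus p t = (∑ i, p i) - k * t := by
  unfold pplus gplus
  rw [← Finset.sum_sub_distrib]
  have h : ∀ i : Fin k, max (p i - t) 0 - max (t - p i) 0 = p i - t := fun i => by
    rcases le_total (p i) t with h | h
    · rw [max_eq_right (by linarith), max_eq_left (by linarith)]; ring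
    · rw [max_eq_left (by linarith), max_eq_right (by linarith)]; ring
  rw [Finset.sum_congr rfl fun i _ => h i, Finset.sum_sub_distrib]
  simp [Finset.card_univ, mul_comm]

lemma descSort_eq_self {a : Fin k → ℝ} (ha : Antitone a) : descSort a = a := by
  have hmono : Monotone (a ∘ (Fin.revPerm : Equiv.Perm (Fin k))) := fun i j hij =>
    ha (by simpa [Fin.rev_le_rev] using hij)
  have h1 : Tuple.sort (a ∘ (Fin.revPerm : Equiv.Perm (Fin k))) = Equiv.refl _ :=
    Tuple.sort_eq_refl_iff_monotone.mpr hmono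
  have h2 := Tuple.comp_perm_comp_sort_eq_comp_sort (σ := (Fin.revPerm : Equiv.Perm (Fin k))) (f := a)
  rw [h1] at h2
  funext i
  have := congrFun h2 i.rev
  simpa [descSort, Fin.rev_rev] using this.symm


lemma psum_eq_sum_ite (a : Fin k → ℝ) (l : ℕ) :
    psum a l = ∑ i : Fin k, if (i : ℕ) < l then a i else 0 := by
  unfold psum; rw [Finset.sum_filter]

lemma card_filter_lt {l : ℕ} (hl : l ≤ k) :
    ((univ : Finset (Fin k)).filter (fun i : Fin k => (i : ℕ) < l)).card = l := by
  have : (univ : Finset (Fin k)).filter (fun i : Fin k => (i : ℕ) < l)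
      = univ.map (Fin.castLEEmb hl) := by
    ext i
    simp only [mem_filter, mem_univ, true_and, Finset.mem_map]
    constructor
    · intro hi
      exact ⟨⟨(i : ℕ), hi⟩, by ext; simp⟩
    · rintro ⟨j, rfl⟩
      simpa using j.isLt
  rw [this, Finset.card_map, Finset.card_univ, Fintype.card_fin]

lemma psum_zero (a : Fin k → ℝ) : psum a 0 = 0 := by
  rw [psum_eq_sum_ite]; simp

lemma psum_total (a : Fin k → ℝ) : psum a k = ∑ i, a i := by
  rw [psum_eq_sum_ite]
  exact Finset.sum_congr rfl fun i _ => by simp [i.isLt]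

lemma psum_mono_of_nonneg {a : Fin k → ℝ} (ha : ∀ i, 0 ≤ a i) {l m : ℕ} (h : l ≤ m) :
    psum a l ≤ psum a m := by
  unfold psum
  refine Finset.sum_le_sum_of_subset_of_nonneg ?_ (fun i _ _ => ha i)
  intro i hi
  simp only [mem_filter, mem_univ, true_and] at *
  omega

/-- any partial sum is at most `l·t + Σ (aᵢ - t)₊`. -/
lemma psum_le_pplus (a : Fin k → ℝ) (t : ℝ) {l : ℕ} (hl : l ≤ k) :
    psum a l ≤ l * t + pplus a t := by
  have h1 : psum a l - l * t = ∑ i ∈ univ.filter (fun i : Fin k => (i : ℕ) < l), (a i - t) := by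
    rw [Finset.sum_sub_distrib, Finset.sum_const, card_filter_lt hl]
    unfold psum; push_cast; ring
  have h2 : ∑ i ∈ univ.filter (fun i : Fin k => (i : ℕ) < l), (a i - t)
      ≤ ∑ i ∈ univ.filter (fun i : Fin k => (i : ℕ) < l), max (a i - t) 0 :=
    Finset.sum_le_sum fun i _ => le_max_left _ _
  have h3 : ∑ i ∈ univ.filter (fun i : Fin k => (i : ℕ) < l), max (a i - t) 0 ≤ pplus a t :=
    Finset.sum_le_sum_of_subset_of_nonneg (Finset.filter_subset _ _)
      (fun i _ _ => le_max_right _ _)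
  linarith

/-- for an antitone vector the bound is attained at `t = a ⟨l-1⟩`. -/
lemma psum_eq_pplus_of_antitone {a : Fin k → ℝ} (ha : Antitone a) {l : ℕ}
    (h1 : 1 ≤ l) (hk : l ≤ k) :
    psum a l = l * a ⟨l - 1, by omega⟩ + pplus a (a ⟨l - 1, by omega⟩) := by
  set t := a ⟨l - 1, by omega⟩ with ht
  have hbig : ∀ i : Fin k, (i : ℕ) < l → t ≤ a i := fun i hi =>
    ha (show i ≤ ⟨l - 1, by omega⟩ from by
      rw [Fin.le_def]; simp; omega)
  have hsmall : ∀ i : Fin k, ¬ (i : ℕ) < l → a i ≤ t := fun i hi =>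
    ha (show (⟨l - 1, by omega⟩ : Fin k) ≤ i from by
      rw [Fin.le_def]; simp; omega)
  have : pplus a t = ∑ i ∈ univ.filter (fun i : Fin k => (i : ℕ) < l), (a i - t) := by
    unfold pplus
    rw [← Finset.sum_filter_add_sum_filter_not univ (fun i : Fin k => (i : ℕ) < l)
        (fun i => max (a i - t) 0)]
    have e1 : ∑ i ∈ univ.filter (fun i : Fin k => (i : ℕ) < l), max (a i - t) 0
        = ∑ i ∈ univ.filter (fun i : Fin k => (i : ℕ) < l), (a i - t) :=
      Finset.sum_congr rfl fun i hi => max_eq_left (by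
        have := hbig i (mem_filter.mp hi).2; linarith)
    have e2 : ∑ i ∈ univ.filter (fun i : Fin k => ¬ (i : ℕ) < l), max (a i - t) 0 = 0 :=
      Finset.sum_eq_zero fun i hi => max_eq_right (by
        have := hsmall i (mem_filter.mp hi).2; linarith)
    rw [e1, e2, add_zero]
  rw [this, Finset.sum_sub_distrib, Finset.sum_const, card_filter_lt hk]
  unfold psum; push_cast; ring

/-- a downward-closed finset of `Fin k` is an initial segment. -/
lemma downward_closed_mem_iff {S : Finset (Fin k)}
    (h : ∀ i j : Fin k, i ≤ j → j ∈ S → i ∈ S) (i : Fin k) :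
    i ∈ S ↔ (i : ℕ) < S.card := by
  constructor
  · intro hi
    have hsub : Finset.Iic i ⊆ S := fun j hj => h j i (Finset.mem_Iic.mp hj) hi
    have := Finset.card_le_card hsub
    rw [Fin.card_Iic] at this; omega
  · intro hi
    by_contra hmem
    have hsub : S ⊆ Finset.Iio i := fun j hj => by
      rw [Finset.mem_Iio]
      rcases lt_or_ge j i with h' | h'
      · exact h'
      · exact absurd (h i j h' hj) hmem
    have := Finset.card_le_card hsub
    rw [Fin.card_Iio] at this; omega

/-- majorization (via partial sums) implies pointwise domination of `pplus`. -/
lemma pplus_le_of_psum_le {p q : Fin k → ℝ} (hq : Antitone q)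
    (hm : ∀ l, l ≤ k → psum q l ≤ psum p l) (t : ℝ) : pplus q t ≤ pplus p t := by
  classical
  set S := univ.filter (fun i : Fin k => t < q i) with hS
  have hdc : ∀ i j : Fin k, i ≤ j → j ∈ S → i ∈ S := fun i j hij hj => by
    simp only [hS, mem_filter, mem_univ, true_and] at *
    exact lt_of_lt_of_le hj (hq hij)
  have hmem := downward_closed_mem_iff hdc
  have hak : S.card ≤ k := le_trans (Finset.card_le_card (Finset.subset_univ S))
    (by rw [Finset.card_univ, Fintype.card_fin])
  have hSeq : S = univ.filter (fun i : Fin k => (i : ℕ) < S.card) := by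
    ext i
    simp only [mem_filter, mem_univ, true_and]
    rw [← hmem i]
  have h1 : pplus q t = psum q S.card - S.card * t := by
    unfold pplus
    rw [← Finset.sum_filter_add_sum_filter_not univ (fun i : Fin k => t < q i)
        (fun i => max (q i - t) 0)]
    have e1 : ∑ i ∈ univ.filter (fun i : Fin k => t < q i), max (q i - t) 0
        = ∑ i ∈ S, (q i - t) := Finset.sum_congr (by rw [hS]) fun i hi =>
        max_eq_left (by have := (mem_filter.mp hi).2; simp only [hS] at *; linarith)
    have e2 : ∑ i ∈ univ.filter (fun i : Fin k => ¬ t < q i), max (q i - t) 0 = 0 :=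
      Finset.sum_eq_zero fun i hi => max_eq_right (by
        have := (mem_filter.mp hi).2; push_neg at this; linarith)
    rw [e1, e2, add_zero, Finset.sum_sub_distrib, Finset.sum_const]
    have : ∑ i ∈ S, q i = psum q S.card := by
      unfold psum; rw [← hSeq]
    rw [this]; push_cast; ring
  have h2 := hm S.card hak
  have h3 := psum_le_pplus p t hak
  linarith


lemma sum_ite_coe_eq (c : Fin k → ℝ) {m : ℕ} (hm : m < k) :
    (∑ i : Fin k, if (i : ℕ) = m then c i else 0) = c ⟨m, hm⟩ := by
  have h : ∀ i : Fin k, (if (i : ℕ) = m then c i else 0) = (if i = ⟨m, hm⟩ then c i else 0) :=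
    fun i => if_congr (by simp [Fin.ext_iff]) rfl rfl
  rw [Finset.sum_congr rfl fun i _ => h i, Finset.sum_ite_eq' univ (⟨m, hm⟩ : Fin k) c]
  simp

lemma psum_succ (a : Fin k → ℝ) {m : ℕ} (hm : m < k) :
    psum a (m + 1) = psum a m + a ⟨m, hm⟩ := by
  rw [psum_eq_sum_ite, psum_eq_sum_ite, ← sum_ite_coe_eq a hm, ← Finset.sum_add_distrib]
  exact Finset.sum_congr rfl fun i _ => by
    rcases lt_trichotomy (i : ℕ) m with h | h | h
    · rw [if_pos (by omega), if_pos (by omega), if_neg (by omega), add_zero]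
    · rw [if_pos (by omega), if_neg (by omega), if_pos h, zero_add]
    · rw [if_neg (by omega), if_neg (by omega), if_neg (by omega), add_zero]

lemma psum_steepR (hk : 0 < k) (δ : ℝ) (p : Fin k → ℝ) {l : ℕ} (hl : 1 ≤ l) :
    psum (steepR δ p) l = psum p l + δ / 2 := by
  rw [psum_eq_sum_ite, psum_eq_sum_ite]
  have h : ∀ i : Fin k, (if (i : ℕ) < l then steepR δ p i else 0)
      = (if (i : ℕ) < l then p i else 0) + (if (i : ℕ) = 0 then δ / 2 else 0) := fun i => by
    have hl0 : 0 < l := hl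
    by_cases h0 : (i : ℕ) = 0
    · simp [steepR, h0, hl0]
    · by_cases h2 : (i : ℕ) < l <;> simp [steepR, h0, h2]
  rw [Finset.sum_congr rfl fun i _ => h i, Finset.sum_add_distrib,
    sum_ite_coe_eq (fun _ => δ / 2) hk]

lemma steep_props {δ : ℝ} (hδ : 0 ≤ δ) {p pbar : Fin k → ℝ} (hp : IsProbDist p)
    (hpord : Antitone p) (hk : 0 < k) (h : IsSteepest δ p pbar) :
    IsProbDist pbar ∧ Antitone pbar ∧
      ∀ l, 1 ≤ l → l ≤ k → psum pbar l = min 1 (psum p l + δ / 2) := by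
  obtain ⟨hnn, hsum⟩ := hp
  have hple : ∀ i : Fin k, p i ≤ p ⟨0, hk⟩ := fun i =>
    hpord (show (⟨0, hk⟩ : Fin k) ≤ i by simp [Fin.le_def])
  have hp0le1 : p ⟨0, hk⟩ ≤ 1 := by
    rw [← hsum]; exact Finset.single_le_sum (fun i _ => hnn i) (mem_univ _)
  have hp0psum : ∀ l, 1 ≤ l → p ⟨0, hk⟩ ≤ psum p l := fun l hl => by
    unfold psum
    exact Finset.single_le_sum (f := p) (fun i _ => hnn i)
      (mem_filter.mpr ⟨mem_univ _, show (0 : ℕ) < l from hl⟩)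
  have hl1 : l1dist p (e1 k) = 2 - 2 * p ⟨0, hk⟩ := by
    unfold l1dist e1
    have h : ∀ i : Fin k, |p i - if (i : ℕ) = 0 then (1 : ℝ) else 0|
        = p i + (if (i : ℕ) = 0 then 1 - 2 * p i else 0) := fun i => by
      by_cases h0 : (i : ℕ) = 0
      · rw [if_pos h0, if_pos h0, abs_sub_comm,
          abs_of_nonneg (by have := le_trans (hple i) hp0le1; linarith)]
        ring
      · rw [if_neg h0, if_neg h0, sub_zero, abs_of_nonneg (hnn i), add_zero]
    rw [Finset.sum_congr rfl fun i _ => h i, Finset.sum_add_distrib, hsum,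
      sum_ite_coe_eq _ hk]
    ring
  rcases h with ⟨hd, heq⟩ | ⟨_, lstar, ⟨hts1, htsk, htsle, htslt⟩, hpt⟩
  · -- trivial branch : pbar = e1
    subst heq
    rw [hl1] at hd
    refine ⟨⟨fun i => by unfold e1; split <;> norm_num, ?_⟩, ?_, ?_⟩
    · show (∑ i : Fin k, e1 k i) = 1
      unfold e1
      rw [sum_ite_coe_eq (fun _ => (1 : ℝ)) hk]
    · intro i j hij
      unfold e1
      by_cases hj : (j : ℕ) = 0
      · have hi : (i : ℕ) = 0 := by have := Fin.le_def.mp hij; omega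
        simp [hi, hj]
      · rw [if_neg hj]; split <;> norm_num
    · intro l hl hlk
      have h1 : psum (e1 k) l = 1 := by
        rw [psum_eq_sum_ite]
        have hpw : ∀ i : Fin k, (if (i : ℕ) < l then e1 k i else 0)
            = (if (i : ℕ) = 0 then (1 : ℝ) else 0) := fun i => by
          by_cases h0 : (i : ℕ) = 0
          · rw [show e1 k i = 1 from by simp [e1, h0], if_pos (show (i : ℕ) < l by omega),
              if_pos h0]
          · rw [show e1 k i = 0 from by simp [e1, h0], if_neg h0, ite_self]
        rw [Finset.sum_congr rfl fun i _ => hpw i, sum_ite_coe_eq (fun _ => (1 : ℝ)) hk]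
      rw [h1, eq_comm]
      apply min_eq_left
      have := hp0psum l hl
      linarith
  · -- nontrivial branch
    set r := steepR δ p with hr
    have hrnn : ∀ i, 0 ≤ r i := fun i => by
      rw [hr]; unfold steepR; split
      · linarith [hnn i]
      · exact hnn i
    have hranti : Antitone r := by
      intro i j hij
      have hij' := Fin.le_def.mp hij
      rw [hr]; unfold steepR
      by_cases hj : (j : ℕ) = 0
      · rw [if_pos hj, if_pos (by omega)]
        have := hpord hij; linarith
      · rw [if_neg hj]
        by_cases hi : (i : ℕ) = 0
        · rw [if_pos hi]; have := hpord hij; linarith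
        · rw [if_neg hi]; exact hpord hij
    have hrsum : ∀ l, 1 ≤ l → psum r l = psum p l + δ / 2 := fun l hl =>
      psum_steepR hk δ p hl
    have hrmono : ∀ {l m : ℕ}, l ≤ m → psum r l ≤ psum r m := fun h =>
      psum_mono_of_nonneg hrnn h
    have hbnn : ∀ i, 0 ≤ pbar i := fun i => by
      rw [hpt i]; split_ifs
      · exact hrnn i
      · linarith
      · exact le_rfl
    have hform : ∀ l, 1 ≤ l → l ≤ k → psum pbar l = min 1 (psum p l + δ / 2) := by
      intro l hl hlk
      rcases le_or_gt l lstar with hll | hll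
      · have he : psum pbar l = psum r l := by
          unfold psum
          exact Finset.sum_congr rfl fun i hi => by
            have hi' : (i : ℕ) < l := by
              have := mem_filter.mp hi; exact this.2
            rw [hpt i, if_pos (by omega)]
        rw [he, hrsum l hl, eq_comm]
        apply min_eq_right
        calc psum p l + δ / 2 = psum r l := (hrsum l hl).symm
          _ ≤ psum r lstar := hrmono hll
          _ ≤ 1 := htsle
      · have hlsk : lstar < k := lt_of_lt_of_le hll hlk
        have hgt1 := htslt hlsk
        have hpw : ∀ i : Fin k, (if (i : ℕ) < l then pbar i else 0)
            = (if (i : ℕ) < lstar then r i else 0)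
              + (if (i : ℕ) = lstar then 1 - psum r lstar else 0) := fun i => by
          by_cases hil : (i : ℕ) < l
          · rw [if_pos hil, hpt i]
            rcases lt_trichotomy (i : ℕ) lstar with h1 | h1 | h1
            · rw [if_pos h1, if_pos h1, if_neg (by omega), add_zero]
            · rw [if_neg (by omega), if_pos h1, if_neg (by omega), zero_add]
            · rw [if_neg (by omega), if_neg (by omega), if_neg (by omega), add_zero]
          · rw [if_neg hil, if_neg (by omega), if_neg (by omega), add_zero]
        have he : psum pbar l = psum r lstar + (1 - psum r lstar) := by
          rw [psum_eq_sum_ite, Finset.sum_congr rfl fun i _ => hpw i,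
            Finset.sum_add_distrib, ← psum_eq_sum_ite,
            sum_ite_coe_eq (fun _ => 1 - psum r lstar) hlsk]
        rw [he, eq_comm]
        have hbig : 1 ≤ psum p l + δ / 2 := by
          have h1 : psum r (lstar + 1) ≤ psum r l := hrmono (by omega)
          rw [hrsum l hl] at h1
          linarith
        rw [min_eq_left hbig]
        ring
    refine ⟨⟨hbnn, ?_⟩, ?_, hform⟩
    · rw [← psum_total, hform k (by omega) le_rfl, psum_total, hsum]
      apply min_eq_left
      linarith
    · intro i j hij
      have hij' := Fin.le_def.mp hij
      rcases lt_trichotomy (j : ℕ) lstar with hj | hj | hj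
      · rw [hpt j, hpt i, if_pos hj, if_pos (by omega)]
        exact hranti hij
      · have hlsk : lstar < k := by have := j.isLt; omega
        have hgt1 := htslt hlsk
        have hsucc := psum_succ r hlsk
        rw [hpt j, if_neg (by omega), if_pos hj, hpt i]
        by_cases hi : (i : ℕ) < lstar
        · rw [if_pos hi]
          have hri : r ⟨lstar, hlsk⟩ ≤ r i :=
            hranti (show i ≤ ⟨lstar, hlsk⟩ by simp [Fin.le_def]; omega)
          linarith
        · rw [if_neg hi, if_pos (by omega)]
      · rw [hpt j, if_neg (by omega), if_neg (by omega)]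
        exact hbnn i


lemma flat_props {δ : ℝ} (hδ : 0 ≤ δ) {p pflat : Fin k → ℝ} (hp : IsProbDist p)
    (hpord : Antitone p) (hk : 0 < k) (h : IsFlattest δ p pflat) :
    IsProbDist pflat ∧ Antitone pflat ∧
      (∀ t, pplus pflat t ≤ max (max 0 (pplus p t - δ / 2)) (1 - k * t)) ∧
      (∀ t, max (max 0 (pplus p t - δ / 2)) (1 - k * t) ≤ pplus pflat t) := by
  obtain ⟨hnn, hsum⟩ := hp
  have hk' : (0 : ℝ) < k := by exact_mod_cast hk
  have hkk : (k : ℝ) * (k : ℝ)⁻¹ = 1 := mul_inv_cancel₀ (ne_of_gt hk')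
  have hid : ∀ t, pplus p t - gplus p t = 1 - k * t := fun t => by
    rw [pplus_sub_gplus, hsum]
  have hg : gplus p (k : ℝ)⁻¹ = pplus p (k : ℝ)⁻¹ := by
    have h1 := hid (k : ℝ)⁻¹
    rw [hkk] at h1; linarith
  have hl1u : l1dist p (unif k) = 2 * pplus p (k : ℝ)⁻¹ := by
    unfold l1dist unif
    have hptw : ∀ i : Fin k, |p i - (k : ℝ)⁻¹|
        = max (p i - (k : ℝ)⁻¹) 0 + max ((k : ℝ)⁻¹ - p i) 0 := fun i => by
      rcases le_total (p i) ((k : ℝ)⁻¹) with h1 | h1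
      · rw [abs_of_nonpos (by linarith), max_eq_right (by linarith),
          max_eq_left (by linarith)]; ring
      · rw [abs_of_nonneg (by linarith), max_eq_left (by linarith),
          max_eq_right (by linarith)]; ring
    rw [Finset.sum_congr rfl fun i _ => hptw i, Finset.sum_add_distrib]
    show pplus p _ + gplus p _ = 2 * pplus p _
    rw [hg]; ring
  have hsum_const : ∀ t : ℝ, (∑ _i : Fin k, t) = k * t := fun t => by
    rw [Finset.sum_const, Finset.card_univ, Fintype.card_fin, nsmul_eq_mul]
  rcases h with ⟨hd, heq⟩ | ⟨hd, x, y, hxI, hyI, hex, hgy, hpt⟩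
  · -- trivial branch : pflat = unif
    subst heq
    rw [hl1u] at hd
    have hpun : ∀ t, pplus (unif k) t = k * max ((k : ℝ)⁻¹ - t) 0 := fun t => by
      unfold pplus unif
      rw [Finset.sum_const, Finset.card_univ, Fintype.card_fin, nsmul_eq_mul]
    refine ⟨⟨fun i => by unfold unif; positivity, ?_⟩, fun i j _ => le_rfl, ?_, ?_⟩
    · show (∑ _i : Fin k, (k : ℝ)⁻¹) = 1
      rw [hsum_const]; exact hkk
    · intro t
      rw [hpun t]
      rcases le_total t ((k : ℝ)⁻¹) with h1 | h1
      · rw [max_eq_left (by linarith)]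
        have : (k : ℝ) * ((k : ℝ)⁻¹ - t) = 1 - k * t := by
          rw [mul_sub, hkk]
        rw [this]; exact le_max_right _ _
      · rw [max_eq_right (by linarith), mul_zero]
        exact le_max_of_le_left (le_max_left _ _)
    · intro t
      apply max_le (max_le (pplus_nonneg _ _) ?_) ?_
      · rcases le_total ((k : ℝ)⁻¹) t with h1 | h1
        · have h2 := pplus_anti p h1
          have h3 := pplus_nonneg (unif k) t
          linarith
        · have h2 := gplus_mono p h1
          have h3 := hid t
          rw [hpun t, max_eq_left (by linarith), mul_sub, hkk]
          linarith
      · rw [hpun t]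
        have : (1 : ℝ) - k * t = k * ((k : ℝ)⁻¹ - t) := by rw [mul_sub, hkk]
        rw [this]
        exact mul_le_mul_of_nonneg_left (le_max_left _ _) (le_of_lt hk')
  · -- nontrivial branch
    rw [epsFn_eq_pplus] at hex
    rw [gammaFn_eq_gplus] at hgy
    have hyx : y ≤ x := by
      by_contra hc
      push_neg at hc
      have h1 : gplus p x ≤ gplus p y := gplus_mono p hc.le
      have h2 : pplus p y ≤ pplus p x := pplus_anti p hc.le
      have hix := hid x
      have hiy := hid y
      have hxk : x ≤ (k : ℝ)⁻¹ := by
        have hkx : (k : ℝ) * x ≤ 1 := by linarith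
        rw [inv_eq_one_div, le_div_iff₀ hk']
        linarith [mul_comm x (k : ℝ)]
      have hky : (k : ℝ)⁻¹ ≤ y := by
        have hkx : 1 ≤ (k : ℝ) * y := by linarith
        rw [inv_eq_one_div, div_le_iff₀ hk']
        linarith [mul_comm y (k : ℝ)]
      have h3 : pplus p (k : ℝ)⁻¹ ≤ δ / 2 := le_trans (pplus_anti p hxk) (le_of_eq hex)
      rw [hl1u] at hd
      linarith
    have hclamp : ∀ i, pflat i = max y (min x (p i)) := fun i => by
      rw [hpt i]
      by_cases hxi : x ≤ p i
      · rw [if_pos hxi, min_eq_left hxi, max_eq_right hyx]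
      · push_neg at hxi
        rw [if_neg (not_le.mpr hxi)]
        by_cases hyi : p i ≤ y
        · rw [if_pos hyi, min_eq_right hxi.le, max_eq_left hyi]
        · push_neg at hyi
          rw [if_neg (not_le.mpr hyi), min_eq_right hxi.le, max_eq_right hyi.le]
    have hfnn : ∀ i, 0 ≤ pflat i := fun i => by
      rw [hclamp i]; exact le_trans hyI.1 (le_max_left _ _)
    have hfanti : Antitone pflat := fun i j hij => by
      rw [hclamp i, hclamp j]
      exact max_le_max le_rfl (min_le_min le_rfl (hpord hij))
    have hfsum : (∑ i, pflat i) = 1 := by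
      have hpw : ∀ i : Fin k, pflat i = p i + (max (y - p i) 0 - max (p i - x) 0) := fun i => by
        rw [hpt i]
        by_cases hxi : x ≤ p i
        · rw [if_pos hxi, max_eq_right (by linarith), max_eq_left (by linarith)]; ring
        · push_neg at hxi
          rw [if_neg (not_le.mpr hxi)]
          by_cases hyi : p i ≤ y
          · rw [if_pos hyi, max_eq_left (by linarith), max_eq_right (by linarith)]; ring
          · push_neg at hyi
            rw [if_neg (not_le.mpr hyi), max_eq_right (by linarith),
              max_eq_right (by linarith)]; ring
      rw [Finset.sum_congr rfl fun i _ => hpw i, Finset.sum_add_distrib, hsum,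
        Finset.sum_sub_distrib]
      show 1 + (gplus p y - pplus p x) = 1
      rw [hgy, hex]; ring
    refine ⟨⟨hfnn, hfsum⟩, hfanti, ?_, ?_⟩
    · -- upper bound
      intro t
      rcases lt_or_ge t y with hty | hty
      · have he : pplus pflat t = 1 - k * t := by
          unfold pplus
          rw [Finset.sum_congr rfl (fun i _ => max_eq_left (by
            have hyi : y ≤ pflat i := by rw [hclamp i]; exact le_max_left _ _
            linarith)), Finset.sum_sub_distrib, hfsum, hsum_const]
        rw [he]; exact le_max_right _ _
      rcases le_or_gt x t with htx | htx
      · have he : pplus pflat t = 0 := by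
          unfold pplus
          exact Finset.sum_eq_zero fun i _ => max_eq_right (by
            have hxi : pflat i ≤ x := by
              rw [hclamp i]; exact max_le (by linarith) (min_le_left _ _)
            linarith)
        rw [he]; exact le_max_of_le_left (le_max_left _ _)
      · have hpw : ∀ i : Fin k, max (pflat i - t) 0
            ≤ max (p i - t) 0 - max (p i - x) 0 := fun i => by
          rw [hpt i]
          by_cases hxi : x ≤ p i
          · rw [if_pos hxi, max_eq_left (by linarith), max_eq_left (by linarith),
              max_eq_left (by linarith)]
            apply le_of_eq; ring
          · push_neg at hxi
            have e1 : max (p i - x) 0 = 0 := max_eq_right (by linarith)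
            rw [if_neg (not_le.mpr hxi), e1, sub_zero]
            by_cases hyi : p i ≤ y
            · rw [if_pos hyi]
              have e2 : max (y - t) 0 = 0 := max_eq_right (by linarith)
              rw [e2]
              exact le_max_right _ _
            · rw [if_neg hyi]
        calc pplus pflat t ≤ ∑ i, (max (p i - t) 0 - max (p i - x) 0) :=
              Finset.sum_le_sum fun i _ => hpw i
          _ = pplus p t - δ / 2 := by
              rw [Finset.sum_sub_distrib]
              show pplus p t - pplus p x = _
              rw [hex]
          _ ≤ max (max 0 (pplus p t - δ / 2)) (1 - k * t) :=
              le_max_of_le_left (le_max_right _ _)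
    · -- lower bound
      intro t
      apply max_le (max_le (pplus_nonneg _ _) ?_) ?_
      · have hpw : ∀ i : Fin k, max (p i - t) 0 - max (p i - x) 0
            ≤ max (pflat i - t) 0 := fun i => by
          rw [hpt i]
          by_cases hxi : x ≤ p i
          · have e1 : max (p i - x) 0 = p i - x := max_eq_left (by linarith)
            rw [if_pos hxi, e1]
            rcases le_total t (p i) with hit | hit
            · have e2 : max (p i - t) 0 = p i - t := max_eq_left (by linarith)
              rw [e2]
              exact le_trans (le_of_eq (by ring)) (le_max_left (x - t) 0)
            · have e2 : max (p i - t) 0 = 0 := max_eq_right (by linarith)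
              rw [e2]
              exact le_trans (by linarith) (le_max_right (x - t) 0)
          · push_neg at hxi
            have e1 : max (p i - x) 0 = 0 := max_eq_right (by linarith)
            rw [if_neg (not_le.mpr hxi), e1, sub_zero]
            by_cases hyi : p i ≤ y
            · rw [if_pos hyi]
              exact max_le_max (by linarith) le_rfl
            · rw [if_neg hyi]
        calc pplus p t - δ / 2 = ∑ i, (max (p i - t) 0 - max (p i - x) 0) := by
              rw [Finset.sum_sub_distrib]
              show _ = pplus p t - pplus p x
              rw [hex]
          _ ≤ pplus pflat t := Finset.sum_le_sum fun i _ => hpw i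
      · have he : (1 : ℝ) - k * t = ∑ i, (pflat i - t) := by
          rw [Finset.sum_sub_distrib, hfsum, hsum_const]
        rw [he]
        exact Finset.sum_le_sum fun i _ => le_max_left _ _

end Aux

/-- for a Schur-convex `f`, the smoothed versions `f̄^(δ)` and `f̲^(δ)` are
monotonic under majorization: if `p ≻ q` then `f(p̄^(δ)) ≥ f(q̄^(δ))` and
`f(p̲^(δ)) ≥ f(q̲^(δ))`. -/
theorem smoothed_schurConvex_monotone {k : ℕ} (f : (Fin k → ℝ) → ℝ)
    (hf : ∀ a b : Fin k → ℝ, IsProbDist a → IsProbDist b → Majorizes a b → f b ≤ f a)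
    (δ : ℝ) (hδ : 0 ≤ δ)
    (p q : Fin k → ℝ) (hp : IsProbDist p) (hq : IsProbDist q)
    (hpord : Antitone p) (hqord : Antitone q) (hmaj : Majorizes p q)
    (pbar qbar pflat qflat : Fin k → ℝ)
    (hpbar : IsSteepest δ p pbar) (hqbar : IsSteepest δ q qbar)
    (hpflat : IsFlattest δ p pflat) (hqflat : IsFlattest δ q qflat) :
    f qbar ≤ f pbar ∧ f qflat ≤ f pflat := by
  rcases Nat.eq_zero_or_pos k with rfl | hk
  · exfalso
    have h2 := hp.2
    simp at h2
  obtain ⟨hpbar1, hpbar2, hpbar3⟩ := steep_props hδ hp hpord hk hpbar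
  obtain ⟨hqbar1, hqbar2, hqbar3⟩ := steep_props hδ hq hqord hk hqbar
  obtain ⟨hpflat1, hpflat2, hpflatU, hpflatL⟩ := flat_props hδ hp hpord hk hpflat
  obtain ⟨hqflat1, hqflat2, hqflatU, hqflatL⟩ := flat_props hδ hq hqord hk hqflat
  have hpsums : ∀ l, l ≤ k → psum q l ≤ psum p l := by
    intro l hlk
    rcases Nat.eq_zero_or_pos l with rfl | hl1
    · rw [psum_zero, psum_zero]
    · have h := hmaj.2 l hl1 hlk
      rwa [descSort_eq_self hpord, descSort_eq_self hqord] at h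
  constructor
  · apply hf _ _ hpbar1 hqbar1
    refine ⟨by rw [hpbar1.2, hqbar1.2], ?_⟩
    intro l hl1 hlk
    rw [descSort_eq_self hpbar2, descSort_eq_self hqbar2, hpbar3 l hl1 hlk,
      hqbar3 l hl1 hlk]
    exact min_le_min le_rfl (by linarith [hpsums l hlk])
  · apply hf _ _ hpflat1 hqflat1
    refine ⟨by rw [hpflat1.2, hqflat1.2], ?_⟩
    intro l hl1 hlk
    rw [descSort_eq_self hpflat2, descSort_eq_self hqflat2]
    have hppe := psum_eq_pplus_of_antitone hpflat2 hl1 hlk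
    set t := pflat ⟨l - 1, by omega⟩ with ht
    have hq1 : psum qflat l ≤ l * t + pplus qflat t := psum_le_pplus qflat t hlk
    have hq2 : pplus qflat t ≤ max (max 0 (pplus q t - δ / 2)) (1 - k * t) := hqflatU t
    have hq3 : max (max 0 (pplus q t - δ / 2)) (1 - k * t)
        ≤ max (max 0 (pplus p t - δ / 2)) (1 - k * t) := by
      have h := pplus_le_of_psum_le hqord hpsums t
      exact max_le_max (max_le_max le_rfl (by linarith)) le_rfl
    have hq4 := hpflatL t
    rw [hppe]
    linarith
end

section
/- Let δ > 0 and let p and q be probability distributions on k elements with non-increasingly ordered entries such that p ≻ q, ‖p − η‖ > δ, and ‖q − η‖ > δ, where η is the uniform distribution. Let x = x*(p), x' = x*(q) be the cutting levels and y = y*(p), y' = y*(q) the filling levels arising in the construction of the flattest δ-approximations of p and q respectively. Then x ≥ x' and y ≤ y'. -/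
open Finset

section Aux

open Finset

lemma my_epsFn_eq {k : ℕ} (p : Fin k → ℝ) (x : ℝ) :
    epsFn p x = ∑ i, max (p i - x) 0 := by
  rw [epsFn, sum_filter]
  refine Finset.sum_congr rfl fun i _ => ?_
  split_ifs with h
  · exact (max_eq_left (by linarith)).symm
  · exact (max_eq_right (by linarith)).symm

lemma my_gammaFn_eq {k : ℕ} (p : Fin k → ℝ) (y : ℝ) :
    gammaFn p y = ∑ i, max (y - p i) 0 := by
  rw [gammaFn, sum_filter]
  refine Finset.sum_congr rfl fun i _ => ?_
  split_ifs with h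
  · exact (max_eq_left (by linarith)).symm
  · exact (max_eq_right (by linarith)).symm

lemma my_sum_descSort {k : ℕ} (a : Fin k → ℝ) (f : ℝ → ℝ) :
    ∑ i, f (descSort a i) = ∑ i, f (a i) := by
  have h : ∀ i, descSort a i = a ((Fin.revPerm.trans (Tuple.sort a)) i) := fun i => by
    simp [descSort]
  simp_rw [h]
  exact Equiv.sum_comp _ (fun i => f (a i))

lemma my_eps_descSort {k : ℕ} (a : Fin k → ℝ) (x : ℝ) :
    epsFn (descSort a) x = epsFn a x := by
  rw [my_epsFn_eq, my_epsFn_eq]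
  exact my_sum_descSort a (fun t => max (t - x) 0)

lemma my_gamma_descSort {k : ℕ} (a : Fin k → ℝ) (y : ℝ) :
    gammaFn (descSort a) y = gammaFn a y := by
  rw [my_gammaFn_eq, my_gammaFn_eq]
  exact my_sum_descSort a (fun t => max (y - t) 0)

lemma my_total_descSort {k : ℕ} (a : Fin k → ℝ) :
    ∑ i, descSort a i = ∑ i, a i := my_sum_descSort a id

lemma my_descSort_antitone {k : ℕ} (a : Fin k → ℝ) : Antitone (descSort a) := by
  intro i j hij
  exact Tuple.monotone_sort a (Fin.rev_le_rev.mpr hij)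

lemma my_downclosed {k : ℕ} (s : Finset (Fin k))
    (hs : ∀ i j : Fin k, i ≤ j → j ∈ s → i ∈ s) :
    s = univ.filter (fun i : Fin k => (i : ℕ) < s.card) := by
  ext i
  simp only [mem_filter, mem_univ, true_and]
  constructor
  · intro hi
    have hsub : Finset.Iic i ⊆ s := fun j hj => hs j i (Finset.mem_Iic.mp hj) hi
    have h1 := Finset.card_le_card hsub
    rw [Fin.card_Iic] at h1
    omega
  · intro h
    by_contra hi
    have hsub : s ⊆ Finset.Iio i := by
      intro j hj
      rw [Finset.mem_Iio]
      by_contra hj'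
      push_neg at hj'
      exact hi (hs i j hj' hj)
    have h1 := Finset.card_le_card hsub
    rw [Fin.card_Iio] at h1
    omega

lemma my_card_filter {k l : ℕ} (hl : l ≤ k) :
    (univ.filter (fun i : Fin k => (i : ℕ) < l)).card = l := by
  have h : (univ.filter fun i : Fin k => (i : ℕ) < l) =
      Finset.attachFin (Finset.range l)
        (fun m hm => lt_of_lt_of_le (Finset.mem_range.mp hm) hl) := by
    ext i
    simp [Finset.mem_attachFin]
  rw [h, Finset.card_attachFin, Finset.card_range]

lemma my_eps_le {k : ℕ} (a b : Fin k → ℝ) (hb : Antitone b)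
    (hl : ∀ l : ℕ, l ≤ k → psum b l ≤ psum a l) (x : ℝ) :
    epsFn b x ≤ epsFn a x := by
  set s := univ.filter (fun i : Fin k => x ≤ b i) with hs
  set l := s.card with hldef
  have hdc : ∀ i j : Fin k, i ≤ j → j ∈ s → i ∈ s := by
    intro i j hij hj
    simp only [hs, mem_filter, mem_univ, true_and] at hj ⊢
    exact hj.trans (hb hij)
  have hseq : s = univ.filter (fun i : Fin k => (i : ℕ) < l) := my_downclosed s hdc
  have hlk : l ≤ k := by
    have h := Finset.card_filter_le univ (fun i : Fin k => x ≤ b i)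
    simpa [← hs] using h
  have hcard : (univ.filter (fun i : Fin k => (i : ℕ) < l)).card = l := my_card_filter hlk
  have hb_eq : epsFn b x = psum b l - l * x := by
    rw [epsFn, ← hs, hseq, Finset.sum_sub_distrib, Finset.sum_const, hcard, psum,
      nsmul_eq_mul]
  have ha_ge : psum a l - l * x ≤ epsFn a x := by
    rw [my_epsFn_eq]
    calc psum a l - l * x
        = ∑ i ∈ univ.filter (fun i : Fin k => (i : ℕ) < l), (a i - x) := by
          rw [Finset.sum_sub_distrib, Finset.sum_const, hcard, psum, nsmul_eq_mul]
      _ ≤ ∑ i ∈ univ.filter (fun i : Fin k => (i : ℕ) < l), max (a i - x) 0 :=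
          Finset.sum_le_sum fun i _ => le_max_left _ _
      _ ≤ ∑ i, max (a i - x) 0 :=
          Finset.sum_le_sum_of_subset_of_nonneg (filter_subset _ _)
            (fun i _ _ => le_max_right _ _)
  have := hl l hlk
  linarith

lemma my_gamma_le {k : ℕ} (a b : Fin k → ℝ) (hb : Antitone b)
    (hsum : ∑ i, a i = ∑ i, b i)
    (hl : ∀ l : ℕ, l ≤ k → psum b l ≤ psum a l) (y : ℝ) :
    gammaFn b y ≤ gammaFn a y := by
  set t := univ.filter (fun i : Fin k => y < b i) with ht
  set l := t.card with hldef
  have hdc : ∀ i j : Fin k, i ≤ j → j ∈ t → i ∈ t := by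
    intro i j hij hj
    simp only [ht, mem_filter, mem_univ, true_and] at hj ⊢
    exact hj.trans_le (hb hij)
  have hteq : t = univ.filter (fun i : Fin k => (i : ℕ) < l) := my_downclosed t hdc
  have hlk : l ≤ k := by
    have h := Finset.card_filter_le univ (fun i : Fin k => y < b i)
    simpa [← ht] using h
  have hcard : (univ.filter (fun i : Fin k => (i : ℕ) < l)).card = l := my_card_filter hlk
  -- sum over t' of (y - c i) = l y - psum c l
  have hts : ∀ c : Fin k → ℝ, ∑ i ∈ univ.filter (fun i : Fin k => (i : ℕ) < l), (y - c i)
      = l * y - psum c l := by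
    intro c
    rw [Finset.sum_sub_distrib, Finset.sum_const, hcard, psum, nsmul_eq_mul]
  have hsplit_b := Finset.sum_filter_add_sum_filter_not univ
    (fun i : Fin k => (i : ℕ) < l) (fun i => y - b i)
  have hb_eq : gammaFn b y = ∑ i, (y - b i) -
      ∑ i ∈ univ.filter (fun i : Fin k => (i : ℕ) < l), (y - b i) := by
    have hiff : ∀ i : Fin k, y < b i ↔ (i : ℕ) < l := by
      intro i
      have hmem := Finset.ext_iff.mp hteq i
      simpa [ht] using hmem
    have hcompl : univ.filter (fun i : Fin k => b i ≤ y)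
        = univ.filter (fun i : Fin k => ¬ (i : ℕ) < l) := by
      ext i
      simp only [mem_filter, mem_univ, true_and, ← hiff, not_lt]
    rw [gammaFn, hcompl]
    linarith [hsplit_b]
  have hsplit_a := Finset.sum_filter_add_sum_filter_not univ
    (fun i : Fin k => (i : ℕ) < l) (fun i => max (y - a i) 0)
  have ha_ge : ∑ i, (y - a i) -
      ∑ i ∈ univ.filter (fun i : Fin k => (i : ℕ) < l), (y - a i) ≤ gammaFn a y := by
    rw [my_gammaFn_eq]
    have h1 : ∑ i ∈ univ.filter (fun i : Fin k => ¬ (i : ℕ) < l), (y - a i)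
        ≤ ∑ i ∈ univ.filter (fun i : Fin k => ¬ (i : ℕ) < l), max (y - a i) 0 :=
      Finset.sum_le_sum fun i _ => le_max_left _ _
    have h2 : (0:ℝ) ≤ ∑ i ∈ univ.filter (fun i : Fin k => (i : ℕ) < l), max (y - a i) 0 :=
      Finset.sum_nonneg fun i _ => le_max_right _ _
    have h3 := Finset.sum_filter_add_sum_filter_not univ
      (fun i : Fin k => (i : ℕ) < l) (fun i => y - a i)
    linarith
  have htot : ∑ i, (y - a i) = ∑ i, (y - b i) := by
    rw [Finset.sum_sub_distrib, Finset.sum_sub_distrib, hsum]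
  have := hl l hlk
  rw [hts a] at ha_ge
  rw [hts b] at hb_eq
  linarith

lemma my_eps_strict {k : ℕ} (p : Fin k → ℝ) {u v : ℝ} (huv : u < v)
    (h : 0 < epsFn p u) : epsFn p v < epsFn p u := by
  simp only [my_epsFn_eq] at h ⊢
  obtain ⟨i, -, hi⟩ : ∃ i ∈ univ, 0 < max (p i - u) 0 := by
    by_contra hc
    push_neg at hc
    have : ∑ i, max (p i - u) 0 ≤ 0 := Finset.sum_nonpos fun i hi => hc i hi
    linarith
  have hpi : u < p i := by
    by_contra h'
    push_neg at h'
    rw [max_eq_right (by linarith : p i - u ≤ 0)] at hi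
    linarith
  refine Finset.sum_lt_sum (fun j _ => max_le_max (sub_le_sub_left huv.le (p j)) (le_refl (0:ℝ))) ⟨i, mem_univ i, ?_⟩
  have : max (p i - v) 0 < p i - u := max_lt (by linarith) (by linarith)
  rwa [max_eq_left (by linarith : (0:ℝ) ≤ p i - u)]

lemma my_gamma_strict {k : ℕ} (p : Fin k → ℝ) {u v : ℝ} (huv : u < v)
    (h : 0 < gammaFn p v) : gammaFn p u < gammaFn p v := by
  simp only [my_gammaFn_eq] at h ⊢
  obtain ⟨i, -, hi⟩ : ∃ i ∈ univ, 0 < max (v - p i) 0 := by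
    by_contra hc
    push_neg at hc
    have : ∑ i, max (v - p i) 0 ≤ 0 := Finset.sum_nonpos fun i hi => hc i hi
    linarith
  have hpi : p i < v := by
    by_contra h'
    push_neg at h'
    rw [max_eq_right (by linarith : v - p i ≤ 0)] at hi
    linarith
  refine Finset.sum_lt_sum (fun j _ => max_le_max (sub_le_sub_right huv.le (p j)) (le_refl (0:ℝ))) ⟨i, mem_univ i, ?_⟩
  have : max (u - p i) 0 < v - p i := max_lt (by linarith) (by linarith)
  rwa [max_eq_left (by linarith : (0:ℝ) ≤ v - p i)]

end Aux

/-- if `p ≻ q` then the cutting levels satisfy `x*(p) ≥ x*(q)` and the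
filling levels satisfy `y*(p) ≤ y*(q)`. -/
theorem levels_monotone_under_majorization {k : ℕ} (δ : ℝ) (hδ : 0 < δ)
    (p q : Fin k → ℝ) (hp : IsProbDist p) (hq : IsProbDist q)
    (hpord : Antitone p) (hqord : Antitone q)
    (hpd : δ < l1dist p (unif k)) (hqd : δ < l1dist q (unif k))
    (hmaj : Majorizes p q)
    (x y x' y' : ℝ)
    (hx : x ∈ Set.Icc (0 : ℝ) 1) (hy : y ∈ Set.Icc (0 : ℝ) 1)
    (hx' : x' ∈ Set.Icc (0 : ℝ) 1) (hy' : y' ∈ Set.Icc (0 : ℝ) 1)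
    (hex : epsFn p x = δ / 2) (hgy : gammaFn p y = δ / 2)
    (hex' : epsFn q x' = δ / 2) (hgy' : gammaFn q y' = δ / 2) :
    x' ≤ x ∧ y ≤ y' := by
  obtain ⟨hsum, hmajl⟩ := hmaj
  have hsums : ∑ i, descSort p i = ∑ i, descSort q i := by
    rw [my_total_descSort, my_total_descSort, hsum]
  have hl' : ∀ l : ℕ, l ≤ k → psum (descSort q) l ≤ psum (descSort p) l := by
    intro l hlk
    rcases Nat.eq_zero_or_pos l with h | h
    · simp [psum, h]
    · exact hmajl l h hlk
  have hbq : Antitone (descSort q) := my_descSort_antitone q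
  have heps : epsFn q x' ≤ epsFn p x' := by
    rw [← my_eps_descSort q, ← my_eps_descSort p]
    exact my_eps_le _ _ hbq hl' x'
  have hgam : gammaFn q y' ≤ gammaFn p y' := by
    rw [← my_gamma_descSort q, ← my_gamma_descSort p]
    exact my_gamma_le _ _ hbq hsums hl' y'
  constructor
  · by_contra hc
    push_neg at hc
    have hpos : 0 < epsFn p x := by rw [hex]; linarith
    have := my_eps_strict p hc hpos
    linarith
  · by_contra hc
    push_neg at hc
    have hpos : 0 < gammaFn p y := by rw [hgy]; linarith
    have := my_gamma_strict p hc hpos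
    linarith
end

section
/- Let δ > 0 and let p be a probability distribution on k elements with non-increasingly ordered entries such that ‖p − η‖ > δ, where η is the uniform distribution, and let x* be the cutting level defined by ε(x*) = δ/2. Then for every l ∈ {1,…,k}, Σ_{i=1}^l p_i ≤ l·x* + δ/2. -/
open Finset

/-- with `x*` the cutting level of `p`, every partial sum satisfies
`Σ_{i=1}^l pᵢ ≤ l·x* + δ/2`. -/
theorem psum_le_cutting_level {k : ℕ} (δ : ℝ) (hδ : 0 < δ)
    (p : Fin k → ℝ) (hp : IsProbDist p) (hord : Antitone p)
    (hpd : δ < l1dist p (unif k))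
    (x : ℝ) (hx : x ∈ Set.Icc (0 : ℝ) 1) (hex : epsFn p x = δ / 2) :
    ∀ l : ℕ, 1 ≤ l → l ≤ k → psum p l ≤ (l : ℝ) * x + δ / 2 := by
  intro l hl1 hlk
  have hcard : (univ.filter (fun i : Fin k => (i : ℕ) < l)).card = l := by
    rcases lt_or_eq_of_le hlk with h | h
    · have he : univ.filter (fun i : Fin k => (i : ℕ) < l) = Finset.Iio ⟨l, h⟩ := by
        ext i; simp [Fin.lt_def]
      rw [he, Fin.card_Iio]
    · have he : univ.filter (fun i : Fin k => (i : ℕ) < l) = univ := by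
        apply Finset.filter_true_of_mem
        intro i _
        exact lt_of_lt_of_le i.isLt (le_of_eq h.symm)
      rw [he, Finset.card_univ, Fintype.card_fin]
      exact h.symm
  have h1 : psum p l ≤ ∑ i ∈ univ.filter (fun i : Fin k => (i : ℕ) < l),
      (x + max (p i - x) 0) := by
    apply Finset.sum_le_sum
    intro i _
    rcases le_total x (p i) with h | h
    · rw [max_eq_left (by linarith)]; linarith
    · rw [max_eq_right (by linarith)]; linarith
  have h2 : ∑ i ∈ univ.filter (fun i : Fin k => (i : ℕ) < l), (x + max (p i - x) 0)
      = (l : ℝ) * x + ∑ i ∈ univ.filter (fun i : Fin k => (i : ℕ) < l), max (p i - x) 0 := by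
    rw [Finset.sum_add_distrib, Finset.sum_const, hcard, nsmul_eq_mul]
  have h3 : ∑ i ∈ univ.filter (fun i : Fin k => (i : ℕ) < l), max (p i - x) 0
      ≤ ∑ i, max (p i - x) 0 :=
    Finset.sum_le_sum_of_subset_of_nonneg (Finset.filter_subset _ _)
      (fun i _ _ => le_max_right _ _)
  have h4 : ∑ i, max (p i - x) 0 = epsFn p x := by
    unfold epsFn
    rw [Finset.sum_filter]
    apply Finset.sum_congr rfl
    intro i _
    by_cases h : x ≤ p i
    · rw [if_pos h, max_eq_left (by linarith)]
    · push_neg at h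
      rw [if_neg (not_le.mpr h), max_eq_right (by linarith)]
  rw [h4, hex] at h3
  linarith
end

section
/- Let δ > 0 and let p be a probability distribution on k elements with non-increasingly ordered entries such that ‖p − η‖ > δ, where η is the uniform distribution, and let y* be the filling level defined by γ(y*) = δ/2. Then for every l ∈ {1,…,k}, Σ_{i=l}^k p_i ≥ (k − l + 1)·y* − δ/2. -/
open Finset

/-- with `y*` the filling level of `p`, every tail sum satisfies
`Σ_{i=l}^k pᵢ ≥ (k − l + 1)·y* − δ/2`. -/
theorem tailSum_ge_filling_level {k : ℕ} (δ : ℝ) (hδ : 0 < δ)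
    (p : Fin k → ℝ) (hp : IsProbDist p) (hord : Antitone p)
    (hpd : δ < l1dist p (unif k))
    (y : ℝ) (hy : y ∈ Set.Icc (0 : ℝ) 1) (hgy : gammaFn p y = δ / 2) :
    ∀ l : ℕ, 1 ≤ l → l ≤ k → ((k : ℝ) - (l : ℝ) + 1) * y - δ / 2 ≤ tailSum p l := by
  intro l hl hk
  have hkpos : 0 < k := lt_of_lt_of_le hl hk
  set S : Finset (Fin k) := univ.filter (fun i : Fin k => l ≤ (i : ℕ) + 1) with hS
  have key : ∑ i ∈ S, (y - p i) ≤ δ / 2 := by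
    rw [← hgy, gammaFn]
    have hsplit : ∑ i ∈ S, (y - p i)
        = ∑ i ∈ S.filter (fun i => p i ≤ y), (y - p i)
          + ∑ i ∈ S.filter (fun i => ¬ p i ≤ y), (y - p i) :=
      (Finset.sum_filter_add_sum_filter_not S _ _).symm
    have h2 : ∑ i ∈ S.filter (fun i => ¬ p i ≤ y), (y - p i) ≤ 0 := by
      apply Finset.sum_nonpos
      intro i hi
      have := (Finset.mem_filter.mp hi).2
      linarith [not_le.mp this]
    have h1 : ∑ i ∈ S.filter (fun i => p i ≤ y), (y - p i)
        ≤ ∑ i ∈ univ.filter (fun i : Fin k => p i ≤ y), (y - p i) := by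
      apply Finset.sum_le_sum_of_subset_of_nonneg
      · intro i hi
        simp only [Finset.mem_filter] at hi ⊢
        exact ⟨Finset.mem_univ i, hi.2⟩
      · intro i hi _
        have := (Finset.mem_filter.mp hi).2
        linarith
    linarith
  have hm : l - 1 < k := by omega
  have hSeq : S = Finset.Ici (⟨l - 1, hm⟩ : Fin k) := by
    ext i
    simp only [hS, Finset.mem_filter, Finset.mem_univ, true_and, Finset.mem_Ici,
      Fin.le_def]
    omega
  have hcard : S.card = k - (l - 1) := by rw [hSeq, Fin.card_Ici]
  have hsum : ∑ i ∈ S, (y - p i) = (S.card : ℝ) * y - tailSum p l := by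
    rw [Finset.sum_sub_distrib, Finset.sum_const, nsmul_eq_mul, tailSum]
  have hcast : ((S.card : ℕ) : ℝ) = (k : ℝ) - (l : ℝ) + 1 := by
    rw [hcard, Nat.cast_sub (by omega : l - 1 ≤ k), Nat.cast_sub hl]; push_cast; ring
  rw [hsum, hcast] at key
  linarith
end

section
/- Let p be a probability distribution on k elements with non-increasingly ordered entries and let δ ≥ 0. Then the flattest δ-approximation p̲^(δ) of p is a probability distribution (its entries are nonnegative and sum to 1), its entries are non-increasingly ordered, and ‖p − p̲^(δ)‖ ≤ δ. -/
open Finset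

lemma epsFn_anti {k : ℕ} (p : Fin k → ℝ) {a b : ℝ} (hab : a ≤ b) :
    epsFn p b ≤ epsFn p a := by
  unfold epsFn
  calc ∑ i ∈ univ.filter (fun i : Fin k => b ≤ p i), (p i - b)
      ≤ ∑ i ∈ univ.filter (fun i : Fin k => b ≤ p i), (p i - a) :=
        Finset.sum_le_sum fun i _ => by linarith
    _ ≤ ∑ i ∈ univ.filter (fun i : Fin k => a ≤ p i), (p i - a) := by
        apply Finset.sum_le_sum_of_subset_of_nonneg
        · intro i hi
          simp only [Finset.mem_filter] at hi ⊢
          exact ⟨hi.1, le_trans hab hi.2⟩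
        · intro i hi _
          have := (Finset.mem_filter.mp hi).2
          linarith

lemma gammaFn_mono {k : ℕ} (p : Fin k → ℝ) {a b : ℝ} (hab : a ≤ b) :
    gammaFn p a ≤ gammaFn p b := by
  unfold gammaFn
  calc ∑ i ∈ univ.filter (fun i : Fin k => p i ≤ a), (a - p i)
      ≤ ∑ i ∈ univ.filter (fun i : Fin k => p i ≤ a), (b - p i) :=
        Finset.sum_le_sum fun i _ => by linarith
    _ ≤ ∑ i ∈ univ.filter (fun i : Fin k => p i ≤ b), (b - p i) := by
        apply Finset.sum_le_sum_of_subset_of_nonneg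
        · intro i hi
          simp only [Finset.mem_filter] at hi ⊢
          exact ⟨hi.1, le_trans hi.2 hab⟩
        · intro i hi _
          have := (Finset.mem_filter.mp hi).2
          linarith

lemma abs_sum_eq {k : ℕ} (p : Fin k → ℝ) (u : ℝ) (h : ∑ i, (p i - u) = 0) :
    (∑ i, |p i - u|) = 2 * epsFn p u ∧ (∑ i, |p i - u|) = 2 * gammaFn p u := by
  constructor
  · have hsplit : ∑ i ∈ univ.filter (fun i : Fin k => u ≤ p i), (p i - u)
        + ∑ i ∈ univ.filter (fun i : Fin k => ¬ u ≤ p i), (p i - u) = 0 := by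
      rw [Finset.sum_filter_add_sum_filter_not]; exact h
    have hasplit : (∑ i, |p i - u|)
        = ∑ i ∈ univ.filter (fun i : Fin k => u ≤ p i), |p i - u|
        + ∑ i ∈ univ.filter (fun i : Fin k => ¬ u ≤ p i), |p i - u| :=
      (Finset.sum_filter_add_sum_filter_not univ _ _).symm
    have h1 : ∑ i ∈ univ.filter (fun i : Fin k => u ≤ p i), |p i - u|
        = ∑ i ∈ univ.filter (fun i : Fin k => u ≤ p i), (p i - u) :=
      Finset.sum_congr rfl fun i hi =>
        abs_of_nonneg (by have := (Finset.mem_filter.mp hi).2; linarith)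
    have h2 : ∑ i ∈ univ.filter (fun i : Fin k => ¬ u ≤ p i), |p i - u|
        = - ∑ i ∈ univ.filter (fun i : Fin k => ¬ u ≤ p i), (p i - u) := by
      rw [← Finset.sum_neg_distrib]
      exact Finset.sum_congr rfl fun i hi =>
        abs_of_neg (by have := (Finset.mem_filter.mp hi).2; push_neg at this; linarith)
    unfold epsFn
    linarith
  · have hsplit : ∑ i ∈ univ.filter (fun i : Fin k => p i ≤ u), (p i - u)
        + ∑ i ∈ univ.filter (fun i : Fin k => ¬ p i ≤ u), (p i - u) = 0 := by
      rw [Finset.sum_filter_add_sum_filter_not]; exact h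
    have hasplit : (∑ i, |p i - u|)
        = ∑ i ∈ univ.filter (fun i : Fin k => p i ≤ u), |p i - u|
        + ∑ i ∈ univ.filter (fun i : Fin k => ¬ p i ≤ u), |p i - u| :=
      (Finset.sum_filter_add_sum_filter_not univ _ _).symm
    have h1 : ∑ i ∈ univ.filter (fun i : Fin k => p i ≤ u), |p i - u|
        = - ∑ i ∈ univ.filter (fun i : Fin k => p i ≤ u), (p i - u) := by
      rw [← Finset.sum_neg_distrib]
      exact Finset.sum_congr rfl fun i hi =>
        abs_of_nonpos (by have := (Finset.mem_filter.mp hi).2; linarith)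
    have h2 : ∑ i ∈ univ.filter (fun i : Fin k => ¬ p i ≤ u), |p i - u|
        = ∑ i ∈ univ.filter (fun i : Fin k => ¬ p i ≤ u), (p i - u) :=
      Finset.sum_congr rfl fun i hi =>
        abs_of_nonneg (by have := (Finset.mem_filter.mp hi).2; push_neg at this; linarith)
    have hg : gammaFn p u = - ∑ i ∈ univ.filter (fun i : Fin k => p i ≤ u), (p i - u) := by
      unfold gammaFn
      rw [← Finset.sum_neg_distrib]
      exact Finset.sum_congr rfl fun i _ => by ring
    linarith

/-- the flattest `δ`-approximation of `p` is a non-increasingly ordered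
probability distribution within ℓ¹ distance `δ` of `p`. -/
theorem flattest_isProbDist {k : ℕ} (δ : ℝ) (hδ : 0 ≤ δ)
    (p : Fin k → ℝ) (hp : IsProbDist p) (hord : Antitone p)
    (pflat : Fin k → ℝ) (hpflat : IsFlattest δ p pflat) :
    IsProbDist pflat ∧ Antitone pflat ∧ l1dist p pflat ≤ δ := by
  have hk : 0 < k := by
    rcases Nat.eq_zero_or_pos k with h | h
    · exfalso; have := hp.2; subst h; simp at this
    · exact h
  have hkR : (k : ℝ) ≠ 0 := Nat.cast_ne_zero.mpr hk.ne'
  rcases hpflat with ⟨hle, rfl⟩ | ⟨hlt, x, y, hx, hy, hex, hgy, hval⟩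
  · refine ⟨⟨fun i => inv_nonneg.mpr (Nat.cast_nonneg k), ?_⟩, fun i j _ => le_rfl, hle⟩
    simp only [unif, Finset.sum_const, Finset.card_univ, Fintype.card_fin, nsmul_eq_mul]
    exact mul_inv_cancel₀ hkR
  · set u : ℝ := (k : ℝ)⁻¹ with hu
    have hsum_u : ∑ i : Fin k, (p i - u) = 0 := by
      rw [Finset.sum_sub_distrib, hp.2, Finset.sum_const, Finset.card_univ,
        Fintype.card_fin, nsmul_eq_mul, mul_inv_cancel₀ hkR]
      ring
    have habs := abs_sum_eq p u hsum_u
    have hl1u : l1dist p (unif k) = ∑ i, |p i - u| := rfl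
    have hux : u < x := by
      by_contra h
      push_neg at h
      have := epsFn_anti p h
      rw [hl1u, habs.1] at hlt
      linarith
    have hyu : y < u := by
      by_contra h
      push_neg at h
      have := gammaFn_mono p h
      rw [hl1u, habs.2] at hlt
      linarith
    have hyx : y < x := lt_trans hyu hux
    have heq : epsFn p x = ∑ i : Fin k, (if x ≤ p i then p i - x else 0) := by
      unfold epsFn; rw [Finset.sum_filter]
    have hgq : gammaFn p y = ∑ i : Fin k, (if p i ≤ y then y - p i else 0) := by
      unfold gammaFn; rw [Finset.sum_filter]
    have hpt : ∀ i, pflat i =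
        p i - (if x ≤ p i then p i - x else 0) + (if p i ≤ y then y - p i else 0) := by
      intro i
      rw [hval i]
      split_ifs <;> first | ring1 | linarith
    refine ⟨⟨?_, ?_⟩, ?_, ?_⟩
    · intro i
      rw [hval i]
      split_ifs
      · exact hx.1
      · exact hy.1
      · exact hp.1 i
    · calc ∑ i, pflat i
          = ∑ i, (p i - (if x ≤ p i then p i - x else 0) + (if p i ≤ y then y - p i else 0)) :=
            Finset.sum_congr rfl fun i _ => hpt i
        _ = ∑ i, p i - ∑ i, (if x ≤ p i then p i - x else 0)
            + ∑ i, (if p i ≤ y then y - p i else 0) := by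
            rw [Finset.sum_add_distrib, Finset.sum_sub_distrib]
        _ = 1 := by rw [hp.2, ← heq, ← hgq, hex, hgy]; ring
    · intro i j hij
      have hpj := hord hij
      rw [hval i, hval j]
      split_ifs <;> linarith
    · have habs2 : ∀ i, |p i - pflat i| =
          (if x ≤ p i then p i - x else 0) + (if p i ≤ y then y - p i else 0) := by
        intro i
        rw [hval i]
        split_ifs with h1 h2
        · linarith
        · rw [abs_of_nonneg (by linarith)]; ring
        · next h3 =>
            rw [abs_of_nonpos (by linarith)]; ring
        · simp
      have : l1dist p pflat = ∑ i, ((if x ≤ p i then p i - x else 0)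
          + (if p i ≤ y then y - p i else 0)) :=
        Finset.sum_congr rfl fun i _ => habs2 i
      rw [this, Finset.sum_add_distrib, ← heq, ← hgq, hex, hgy]
      linarith
end

section
/- Let δ > 0 and let p be a probability distribution on k elements with non-increasingly ordered entries such that ‖p − η‖ > δ, where η is the uniform distribution. Let x*, y* be the cutting and filling levels of the flattest δ-approximation p̲^(δ), let I = {i : p_i ≥ x*} = {1,…,l_I} and J = {i : p_i ≤ y*} = {l_J,…,k}. Then the Lorenz curve of p̲^(δ) satisfies: Σ_{i=1}^l p̲^(δ)_i = l·x* for l ∈ I, Σ_{i=1}^l p̲^(δ)_i = Σ_{i=1}^l p_i − δ/2 for l ∉ I ∪ J, and Σ_{i=1}^l p̲^(δ)_i = 1 − (k − l)·y* for l ∈ J. -/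
open Finset

private lemma filter_range_lt' (k l : ℕ) (h : l ≤ k) :
    (Finset.range k).filter (fun n => n < l) = Finset.range l := by
  ext n; simp only [Finset.mem_filter, Finset.mem_range]; omega

private lemma psum_eq_sum_range' {k : ℕ} (f : Fin k → ℝ) (l : ℕ) (hl : l ≤ k) :
    psum f l = ∑ n ∈ Finset.range l, if h : n < k then f ⟨n, h⟩ else 0 := by
  unfold psum
  rw [sum_filter]
  have h1 : (∑ i : Fin k, if (i : ℕ) < l then f i else 0)
      = ∑ i : Fin k,
        (fun n => if n < l then (if h : n < k then f ⟨n, h⟩ else 0) else 0) (i : ℕ) := by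
    apply Finset.sum_congr rfl
    intro i _
    simp [i.isLt]
  have h2 := Fin.sum_univ_eq_sum_range
    (fun n => if n < l then (if h : n < k then f ⟨n, h⟩ else 0) else 0) k
  have h3 : (∑ n ∈ Finset.range k, if n < l then (if h : n < k then f ⟨n, h⟩ else 0) else 0)
      = ∑ n ∈ Finset.range l, if h : n < k then f ⟨n, h⟩ else 0 := by
    rw [← filter_range_lt' k l hl, Finset.sum_filter]
  exact h1.trans (h2.trans h3)

private lemma card_filter_fin_lt' {k : ℕ} (l : ℕ) (hl : l ≤ k) :
    ((((univ : Finset (Fin k)).filter fun i : Fin k => (i : ℕ) < l).card : ℝ)) = l := by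
  have h := psum_eq_sum_range' (fun _ : Fin k => (1 : ℝ)) l hl
  unfold psum at h
  rw [Finset.sum_const, nsmul_eq_mul, mul_one] at h
  rw [h, Finset.sum_congr rfl
    (fun n hn => dif_pos (lt_of_lt_of_le (Finset.mem_range.mp hn) hl))]
  simp
/-- the Lorenz curve of the flattest `δ`-approximation: it equals `l·x*` on
`I = {1,…,l_I}`, equals `Σ_{i=1}^l pᵢ − δ/2` strictly between `I` and `J`, and equals
`1 − (k − l)·y*` on `J = {l_J,…,k}`. -/
theorem lorenz_curve_flattest {k : ℕ} (δ : ℝ) (hδ : 0 < δ)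
    (p : Fin k → ℝ) (hp : IsProbDist p) (hord : Antitone p)
    (hpd : δ < l1dist p (unif k))
    (x y : ℝ) (hx : x ∈ Set.Icc (0 : ℝ) 1) (hy : y ∈ Set.Icc (0 : ℝ) 1)
    (hex : epsFn p x = δ / 2) (hgy : gammaFn p y = δ / 2)
    (lI lJ : ℕ)
    (hI : ∀ i : Fin k, x ≤ p i ↔ (i : ℕ) < lI)
    (hJ : ∀ i : Fin k, p i ≤ y ↔ lJ ≤ (i : ℕ) + 1)
    (pflat : Fin k → ℝ)
    (hpflat : ∀ i : Fin k,
      pflat i = if x ≤ p i then x else if p i ≤ y then y else p i) :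
    (∀ l : ℕ, 1 ≤ l → l ≤ lI → psum pflat l = (l : ℝ) * x) ∧
    (∀ l : ℕ, lI < l → l < lJ → psum pflat l = psum p l - δ / 2) ∧
    (∀ l : ℕ, lJ ≤ l → l ≤ k → psum pflat l = 1 - ((k : ℝ) - (l : ℝ)) * y) := by

  obtain ⟨hp0, hp1⟩ := hp
  have hk : 0 < k := by
    rcases Nat.eq_zero_or_pos k with h | h
    · subst h
      simp [l1dist] at hpd
      linarith
    · exact h
  have hkR : (0 : ℝ) < k := Nat.cast_pos.mpr hk
  have hsum0 : ∑ i : Fin k, (p i - (k : ℝ)⁻¹) = 0 := by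
    rw [Finset.sum_sub_distrib, hp1, Finset.sum_const, Finset.card_univ, Fintype.card_fin,
      nsmul_eq_mul, mul_inv_cancel₀ hkR.ne']
    ring
  have habs : ∀ i : Fin k, |p i - (k : ℝ)⁻¹|
      = 2 * (if (k : ℝ)⁻¹ ≤ p i then p i - (k : ℝ)⁻¹ else 0) - (p i - (k : ℝ)⁻¹) := by
    intro i
    rcases le_or_gt ((k : ℝ)⁻¹) (p i) with h | h
    · rw [if_pos h, abs_of_nonneg (by linarith)]; ring
    · rw [if_neg (not_le.mpr h), abs_of_neg (by linarith)]; ring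
  have habs' : ∀ i : Fin k, |p i - (k : ℝ)⁻¹|
      = 2 * (if p i ≤ (k : ℝ)⁻¹ then (k : ℝ)⁻¹ - p i else 0) + (p i - (k : ℝ)⁻¹) := by
    intro i
    rcases le_or_gt (p i) ((k : ℝ)⁻¹) with h | h
    · rw [if_pos h, abs_of_nonpos (by linarith)]; ring
    · rw [if_neg (not_le.mpr h), abs_of_pos (by linarith)]; ring
  have hl1e : l1dist p (unif k) = 2 * epsFn p ((k : ℝ)⁻¹) := by
    unfold l1dist epsFn unif
    rw [sum_filter, Finset.sum_congr rfl (fun i _ => habs i), Finset.sum_sub_distrib,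
      hsum0, ← Finset.mul_sum]
    ring
  have hl1g : l1dist p (unif k) = 2 * gammaFn p ((k : ℝ)⁻¹) := by
    unfold l1dist gammaFn unif
    rw [sum_filter, Finset.sum_congr rfl (fun i _ => habs' i), Finset.sum_add_distrib,
      hsum0, ← Finset.mul_sum]
    ring
  have heps_anti : ∀ u v : ℝ, u ≤ v → epsFn p v ≤ epsFn p u := by
    intro u v huv
    unfold epsFn
    rw [sum_filter, sum_filter]
    apply Finset.sum_le_sum
    intro i _
    split_ifs <;> linarith
  have hgam_mono : ∀ u v : ℝ, u ≤ v → gammaFn p u ≤ gammaFn p v := by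
    intro u v huv
    unfold gammaFn
    rw [sum_filter, sum_filter]
    apply Finset.sum_le_sum
    intro i _
    split_ifs <;> linarith
  have hx_gt : (k : ℝ)⁻¹ < x := by
    by_contra h
    push_neg at h
    have h2 := heps_anti x ((k : ℝ)⁻¹) h
    rw [hex] at h2
    linarith
  have hy_lt : y < (k : ℝ)⁻¹ := by
    by_contra h
    push_neg at h
    have h2 := hgam_mono ((k : ℝ)⁻¹) y h
    rw [hgy] at h2
    linarith
  have hyx : y < x := hy_lt.trans hx_gt
  have hlI_le : lI ≤ k := by
    by_contra h
    push_neg at h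
    have hxall : ∀ i : Fin k, x ≤ p i := fun i => (hI i).mpr (i.isLt.trans h)
    have h1 : ∑ i : Fin k, x ≤ ∑ i, p i :=
      Finset.sum_le_sum (fun i _ => hxall i)
    rw [hp1, Finset.sum_const, Finset.card_univ, Fintype.card_fin, nsmul_eq_mul] at h1
    nlinarith [mul_lt_mul_of_pos_left hx_gt hkR, mul_inv_cancel₀ hkR.ne']
  have hlI_pos : 1 ≤ lI := by
    by_contra h
    push_neg at h
    have hempty : ((univ : Finset (Fin k)).filter fun i : Fin k => x ≤ p i) = ∅ := by
      apply Finset.filter_eq_empty_iff.mpr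
      intro i _ hx'
      have h2 : (i : ℕ) < lI := (hI i).mp hx'
      omega
    unfold epsFn at hex
    rw [hempty] at hex
    simp at hex
    linarith
  have hlJ_le : lJ ≤ k := by
    by_contra h
    push_neg at h
    have hempty : ((univ : Finset (Fin k)).filter fun i : Fin k => p i ≤ y) = ∅ := by
      apply Finset.filter_eq_empty_iff.mpr
      intro i _ hy'
      have h2 : lJ ≤ (i : ℕ) + 1 := (hJ i).mp hy'
      have := i.isLt
      omega
    unfold gammaFn at hgy
    rw [hempty] at hgy
    simp at hgy
    linarith
  have hlIJ : lI < lJ := by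
    by_contra h
    push_neg at h
    have hi0 : lI - 1 < k := by omega
    have h1 : x ≤ p ⟨lI - 1, hi0⟩ := (hI ⟨lI - 1, hi0⟩).mpr (by
      show lI - 1 < lI
      omega)
    have h2 : p ⟨lI - 1, hi0⟩ ≤ y := (hJ ⟨lI - 1, hi0⟩).mpr (by
      show lJ ≤ lI - 1 + 1
      omega)
    linarith
  have hfiltI : ((univ : Finset (Fin k)).filter fun i : Fin k => x ≤ p i)
      = (univ : Finset (Fin k)).filter fun i : Fin k => (i : ℕ) < lI :=
    Finset.filter_congr (fun i _ => by simpa using hI i)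
  have headp : psum p lI = δ / 2 + (lI : ℝ) * x := by
    have h1 : epsFn p x = psum p lI - (lI : ℝ) * x := by
      unfold epsFn psum
      rw [hfiltI, Finset.sum_sub_distrib, Finset.sum_const, nsmul_eq_mul,
        card_filter_fin_lt' lI hlI_le]
    rw [hex] at h1
    linarith
  have hsum_pflat : ∑ i, pflat i = 1 := by
    have hdiff : ∀ i : Fin k, pflat i - p i
        = (if x ≤ p i then x - p i else 0) + (if p i ≤ y then y - p i else 0) := by
      intro i
      rw [hpflat i]
      split_ifs <;> linarith
    have e1 : (∑ i : Fin k, if x ≤ p i then x - p i else 0) = -epsFn p x := by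
      unfold epsFn
      rw [sum_filter, ← Finset.sum_neg_distrib]
      apply Finset.sum_congr rfl
      intro i _
      split_ifs <;> ring
    have e2 : (∑ i : Fin k, if p i ≤ y then y - p i else 0) = gammaFn p y := by
      unfold gammaFn
      rw [sum_filter]
    have h0 : ∑ i : Fin k, (pflat i - p i) = 0 := by
      rw [Finset.sum_congr rfl (fun i _ => hdiff i), Finset.sum_add_distrib, e1, e2, hex, hgy]
      ring
    rw [Finset.sum_sub_distrib, hp1] at h0
    linarith
  have stmt1 : ∀ l : ℕ, 1 ≤ l → l ≤ lI → psum pflat l = (l : ℝ) * x := by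
    intro l _ hl2
    have hlk : l ≤ k := le_trans hl2 hlI_le
    rw [psum_eq_sum_range' pflat l hlk]
    have hcg : ∀ n ∈ Finset.range l, (if h : n < k then pflat ⟨n, h⟩ else 0) = x := by
      intro n hn
      rw [Finset.mem_range] at hn
      have hnk : n < k := lt_of_lt_of_le hn hlk
      have hx' : x ≤ p ⟨n, hnk⟩ := (hI ⟨n, hnk⟩).mpr (by
        show n < lI
        omega)
      rw [dif_pos hnk, hpflat ⟨n, hnk⟩, if_pos hx']
    rw [Finset.sum_congr rfl hcg, Finset.sum_const, Finset.card_range, nsmul_eq_mul]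
  refine ⟨stmt1, ?_, ?_⟩
  · intro l hl1 hl2
    have hlk : l ≤ k := le_of_lt (lt_of_lt_of_le hl2 hlJ_le)
    rw [psum_eq_sum_range' pflat l hlk, psum_eq_sum_range' p l hlk]
    have hsplitG := Finset.sum_Ico_consecutive
      (fun n => if h : n < k then pflat ⟨n, h⟩ else 0) (Nat.zero_le lI) hl1.le
    have hsplitF := Finset.sum_Ico_consecutive
      (fun n => if h : n < k then p ⟨n, h⟩ else 0) (Nat.zero_le lI) hl1.le
    have hmid : ∀ n ∈ Finset.Ico lI l, (if h : n < k then pflat ⟨n, h⟩ else 0)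
        = (if h : n < k then p ⟨n, h⟩ else 0) := by
      intro n hn
      rw [Finset.mem_Ico] at hn
      have hnk : n < k := lt_of_lt_of_le hn.2 hlk
      have h1 : ¬ x ≤ p ⟨n, hnk⟩ := by
        intro h
        have h2 : n < lI := (hI ⟨n, hnk⟩).mp h
        omega
      have h2 : ¬ p ⟨n, hnk⟩ ≤ y := by
        intro h
        have h3 : lJ ≤ n + 1 := (hJ ⟨n, hnk⟩).mp h
        omega
      rw [dif_pos hnk, dif_pos hnk, hpflat ⟨n, hnk⟩, if_neg h1, if_neg h2]
    have hheadG : (∑ n ∈ Finset.Ico 0 lI, if h : n < k then pflat ⟨n, h⟩ else 0)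
        = (lI : ℝ) * x := by
      rw [← Finset.range_eq_Ico, ← psum_eq_sum_range' pflat lI hlI_le]
      exact stmt1 lI hlI_pos le_rfl
    have hheadF : (∑ n ∈ Finset.Ico 0 lI, if h : n < k then p ⟨n, h⟩ else 0)
        = δ / 2 + (lI : ℝ) * x := by
      rw [← Finset.range_eq_Ico, ← psum_eq_sum_range' p lI hlI_le]
      exact headp
    rw [Finset.range_eq_Ico, ← hsplitG, ← hsplitF, hheadG, hheadF,
      Finset.sum_congr rfl hmid]
    ring
  · intro l hl1 hlk
    rw [psum_eq_sum_range' pflat l hlk]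
    have htot : (∑ n ∈ Finset.Ico 0 k, if h : n < k then pflat ⟨n, h⟩ else 0) = 1 := by
      rw [← Finset.range_eq_Ico, ← psum_eq_sum_range' pflat k le_rfl]
      unfold psum
      rw [Finset.filter_true_of_mem (fun i _ => i.isLt)]
      exact hsum_pflat
    have hsplit := Finset.sum_Ico_consecutive
      (fun n => if h : n < k then pflat ⟨n, h⟩ else 0) (Nat.zero_le l) hlk
    have htail : (∑ n ∈ Finset.Ico l k, if h : n < k then pflat ⟨n, h⟩ else 0)
        = ((k : ℝ) - l) * y := by
      have hcg : ∀ n ∈ Finset.Ico l k, (if h : n < k then pflat ⟨n, h⟩ else 0) = y := by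
        intro n hn
        rw [Finset.mem_Ico] at hn
        have h1 : ¬ x ≤ p ⟨n, hn.2⟩ := by
          intro h
          have h2 : n < lI := (hI ⟨n, hn.2⟩).mp h
          omega
        have h2 : p ⟨n, hn.2⟩ ≤ y := (hJ ⟨n, hn.2⟩).mpr (by
          show lJ ≤ n + 1
          omega)
        rw [dif_pos hn.2, hpflat ⟨n, hn.2⟩, if_neg h1, if_pos h2]
      rw [Finset.sum_congr rfl hcg, Finset.sum_const, Nat.card_Ico, nsmul_eq_mul,
        Nat.cast_sub hlk]
    rw [Finset.range_eq_Ico]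
    rw [htail] at hsplit
    rw [htot] at hsplit
    linarith
end
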